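/- Let n ≥ 1 and let X be a path-connected topological space with basepoint x_0. Then X is semilocally π_n-trivial if and only if there exists an open cover 𝒰 of X such that the n-th Spanier group π_n^{Sp}(𝒰,x_0) is the trivial subgroup of π_n(X,x_0). -/

import Mathlib

open Set Topology unitInterval ContinuousMap

noncomputable section

/-- `𝒰` is an open cover of `X`. -/
def IsOpenCover {X : Type*} [TopologicalSpace X] (𝒰 : Set (Set X)) : Prop :=
  (∀ U ∈ 𝒰, IsOpen U) ∧ ⋃₀ 𝒰 = univ

variable {X : Type*} [TopologicalSpace X]

/-- A continuous map `I^N → X` which, when regarded as a map on the `N`-sphere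
(i.e. a cube map constant on the boundary), is freely homotopic---through maps
constant on the boundary---to a map whose image is contained in some member of `𝒰`. -/
def FreelySmall {N : Type*} (𝒰 : Set (Set X)) (p : C((N → I), X)) : Prop :=
  ∃ (q : C((N → I), X)) (U : Set X) (H : ContinuousMap.Homotopy p q),
    U ∈ 𝒰 ∧ range q ⊆ U ∧
      ∀ t : I, ∀ y ∈ Cube.boundary N, ∀ z ∈ Cube.boundary N, H (t, y) = H (t, z)

/-- The `(n+1)`-st Spanier group of `(X,x₀)` with respect to the cover `𝒰`:
the subgroup of `π_{n+1}(X,x₀)` generated by classes of based maps which are freely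
homotopic (as sphere maps) into some member of `𝒰`. -/
def spanierGroup (n : ℕ) (𝒰 : Set (Set X)) (x₀ : X) : Subgroup (π_ (n + 1) X x₀) :=
  Subgroup.closure {γ | ∃ f : GenLoop (Fin (n + 1)) X x₀, FreelySmall 𝒰 f.1 ∧ γ = ⟦f⟧}

/-- The absolute `(n+1)`-st Spanier group of `(X,x₀)`: the intersection of the
Spanier groups over all open covers of `X`. -/
def spanierGroupAbs (n : ℕ) (x₀ : X) : Subgroup (π_ (n + 1) X x₀) :=
  ⨅ (𝒰 : Set (Set X)) (_ : IsOpenCover 𝒰), spanierGroup n 𝒰 x₀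

/-- The unit `k`-sphere, as a subset of `ℝ^{k+1}`. -/
abbrev unitSphere (k : ℕ) : Set (EuclideanSpace ℝ (Fin (k + 1))) := Metric.sphere 0 1

/-- `X` is semilocally `π_n`-trivial: every point has a neighborhood `U` such that any
continuous map `S^n → U` is null-homotopic in `X`. -/
def SemilocallyPiTrivial (n : ℕ) (X : Type*) [TopologicalSpace X] : Prop :=
  ∀ x : X, ∃ U : Set X, IsOpen U ∧ x ∈ U ∧
    ∀ f : C(unitSphere n, X), range f ⊆ U →
      ∃ c : X, ContinuousMap.Homotopic f (ContinuousMap.const _ c)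

namespace SpanierAux

open Real

variable {n : ℕ}

/-- coordinates rescaled to `[-1,1]`. -/
def cubeVec (y : I^ Fin (n + 1)) : Fin (n + 1) → ℝ := fun i => 2 * (y i : ℝ) - 1

/-- sup-norm radius in `[0,1]`; equals 1 exactly on the boundary. -/
def rr (y : I^ Fin (n + 1)) : ℝ := ‖cubeVec y‖

lemma continuous_cubeVec : Continuous (cubeVec (n := n)) := by
  unfold cubeVec; fun_prop

lemma continuous_rr : Continuous (rr (n := n)) := continuous_cubeVec.norm

lemma abs_cubeVec_le_one (y : I^ Fin (n + 1)) (i) : |cubeVec y i| ≤ 1 := by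
  have h0 := (y i).2.1; have h1 := (y i).2.2
  rw [abs_le]; constructor <;> [skip; skip] <;> simp [cubeVec] <;> nlinarith

lemma rr_nonneg (y : I^ Fin (n + 1)) : 0 ≤ rr y := norm_nonneg _

lemma rr_le_one (y : I^ Fin (n + 1)) : rr y ≤ 1 := by
  rw [rr, pi_norm_le_iff_of_nonneg zero_le_one]
  intro i; simpa using abs_cubeVec_le_one y i

lemma abs_cubeVec_le_rr (y : I^ Fin (n + 1)) (i) : |cubeVec y i| ≤ rr y := by
  simpa [rr] using norm_le_pi_norm (cubeVec y) i

lemma rr_eq_one_iff {y : I^ Fin (n + 1)} : rr y = 1 ↔ y ∈ Cube.boundary (Fin (n + 1)) := by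
  constructor
  · intro h
    by_contra hb
    have hlt : ∀ i, |cubeVec y i| < 1 := by
      intro i
      have h0 := (y i).2.1; have h1 := (y i).2.2
      have hi0 : y i ≠ 0 := fun hc => hb ⟨i, Or.inl hc⟩
      have hi1 : y i ≠ 1 := fun hc => hb ⟨i, Or.inr hc⟩
      have h0' : (0:ℝ) < (y i : ℝ) := lt_of_le_of_ne h0 (by
        intro hc; exact hi0 (by ext; simp [← hc]))
      have h1' : (y i : ℝ) < 1 := lt_of_le_of_ne h1 (by
        intro hc; exact hi1 (by ext; simp [hc]))
      rw [abs_lt, cubeVec]; constructor <;> nlinarith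
    have := (pi_norm_lt_iff (x := cubeVec y) zero_lt_one).2 (by intro i; simpa using hlt i)
    rw [rr] at h; rw [h] at this; exact lt_irrefl _ this
  · rintro ⟨i, hi | hi⟩
    · refine le_antisymm (rr_le_one y) ?_
      have := abs_cubeVec_le_rr y i
      simpa [cubeVec, hi] using this
    · refine le_antisymm (rr_le_one y) ?_
      have := abs_cubeVec_le_rr y i
      simpa [cubeVec, hi, show |(2:ℝ)-1| = 1 by norm_num] using this

/-- base boundary point of the cube -/
def y₀ : I^ Fin (n + 1) := fun _ => 0

lemma y₀_mem_boundary : (y₀ (n := n)) ∈ Cube.boundary (Fin (n + 1)) := ⟨0, Or.inl rfl⟩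

/-- Euclidean vector version of `cubeVec`. -/
def eVec (y : I^ Fin (n + 1)) : EuclideanSpace ℝ (Fin (n + 1)) :=
  (WithLp.equiv 2 _).symm (cubeVec y)

/-- Euclidean norm of `cubeVec`. -/
def n2 (y : I^ Fin (n + 1)) : ℝ := ‖eVec y‖

lemma continuous_eVec : Continuous (eVec (n := n)) :=
  (PiLp.continuous_toLp 2 _).comp continuous_cubeVec

lemma continuous_n2 : Continuous (n2 (n := n)) := continuous_eVec.norm

lemma n2_eq_zero_iff {y : I^ Fin (n + 1)} : n2 y = 0 ↔ cubeVec y = 0 := by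
  rw [n2, norm_eq_zero]
  constructor
  · intro h; funext i
    have := congrFun (congrArg (WithLp.equiv 2 _) (h : eVec y = 0)) i
    simpa [eVec] using this
  · intro h; rw [eVec, h]; simp

lemma rr_eq_zero_iff {y : I^ Fin (n + 1)} : rr y = 0 ↔ cubeVec y = 0 := by
  rw [rr, norm_eq_zero]

lemma n2_pos_of_rr_pos {y : I^ Fin (n + 1)} (h : 0 < rr y) : 0 < n2 y := by
  rcases lt_or_eq_of_le (norm_nonneg (eVec y)) with h' | h'
  · exact h'
  · exfalso
    have : cubeVec y = 0 := n2_eq_zero_iff.1 h'.symm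
    rw [rr_eq_zero_iff.2 this] at h; exact lt_irrefl _ h

lemma cubeVec_injective : Function.Injective (cubeVec (n := n)) := by
  intro a b h
  funext i
  have := congrFun h i
  simp only [cubeVec] at this
  ext; linarith

lemma abs_coord_le_n2 (y : I^ Fin (n + 1)) (i) : |cubeVec y i| ≤ n2 y := by
  rw [n2, EuclideanSpace.norm_eq]
  have h1 : (cubeVec y i) ^ 2 ≤ ∑ j, ‖eVec y j‖ ^ 2 := by
    have : ∀ j, (0:ℝ) ≤ ‖eVec y j‖ ^ 2 := fun j => sq_nonneg _
    have := Finset.single_le_sum (f := fun j => ‖eVec y j‖ ^ 2) (fun j _ => this j)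
      (Finset.mem_univ i)
    simpa [eVec, sq_abs] using this
  calc |cubeVec y i| = Real.sqrt ((cubeVec y i) ^ 2) := (Real.sqrt_sq_eq_abs _).symm
    _ ≤ _ := Real.sqrt_le_sqrt h1

lemma sum_sq_eVec (y : I^ Fin (n + 1)) : ∑ j, (cubeVec y j) ^ 2 = n2 y ^ 2 := by
  rw [n2, EuclideanSpace.norm_eq, Real.sq_sqrt (by positivity)]
  congr 1; funext j; simp [eVec, sq_abs]

open Real in
/-- scaling factor for the first block of the sphere map -/
def scale (y : I^ Fin (n + 1)) : ℝ := Real.sin (π * rr y) / n2 y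

open Real in
/-- the sphere map as a bare vector -/
def gvec (y : I^ Fin (n + 1)) : Fin (n + 2) → ℝ :=
  Fin.snoc (fun i => scale y * cubeVec y i) (Real.cos (π * rr y))

/-- the cube-to-sphere map, as a map to the ambient Euclidean space -/
def gmap (y : I^ Fin (n + 1)) : EuclideanSpace ℝ (Fin (n + 2)) :=
  (WithLp.equiv 2 _).symm (gvec y)

@[simp] lemma gmap_castSucc (y : I^ Fin (n + 1)) (i : Fin (n + 1)) :
    gmap y (Fin.castSucc i) = scale y * cubeVec y i := by
  simp [gmap, gvec]

open Real in
@[simp] lemma gmap_last (y : I^ Fin (n + 1)) :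
    gmap y (Fin.last (n + 1)) = Real.cos (π * rr y) := by
  simp [gmap, gvec]

open Real in
lemma norm_gmap (y : I^ Fin (n + 1)) : ‖gmap y‖ = 1 := by
  rw [EuclideanSpace.norm_eq]
  have key : ∑ i, ‖gmap y i‖ ^ 2 = 1 := by
    have : ∀ i : Fin (n + 2), ‖gmap y i‖ ^ 2 = (gmap y i) ^ 2 := fun i => sq_abs _
    simp_rw [this]
    rw [Fin.sum_univ_castSucc]
    simp only [gmap_castSucc, gmap_last]
    have hsum : ∑ i : Fin (n + 1), (scale y * cubeVec y i) ^ 2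
        = scale y ^ 2 * n2 y ^ 2 := by
      rw [← sum_sq_eVec, Finset.mul_sum]
      congr 1; funext i; ring
    rw [hsum]
    by_cases h : n2 y = 0
    · have h0 : rr y = 0 := rr_eq_zero_iff.2 (n2_eq_zero_iff.1 h)
      simp [h, h0]
    · have : scale y ^ 2 * n2 y ^ 2 = Real.sin (π * rr y) ^ 2 := by
        rw [scale]; field_simp
      rw [this, Real.sin_sq_add_cos_sq]
  rw [key, Real.sqrt_one]

open Real in
lemma continuous_scaleCoord (i : Fin (n + 1)) :
    Continuous fun y : I^ Fin (n + 1) => scale y * cubeVec y i := by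
  rw [continuous_iff_continuousAt]
  intro y
  by_cases h : n2 y = 0
  · have hcv : cubeVec y = 0 := n2_eq_zero_iff.1 h
    have hval : scale y * cubeVec y i = 0 := by
      rw [hcv]; simp
    rw [ContinuousAt, hval]
    apply squeeze_zero_norm (a := fun z => |Real.sin (π * rr z)|)
    · intro z
      by_cases hz : n2 z = 0
      · have : cubeVec z = 0 := n2_eq_zero_iff.1 hz
        simp [this, abs_nonneg]
      · have hn : 0 < n2 z := lt_of_le_of_ne (norm_nonneg _) (Ne.symm hz)
        have h1 : |cubeVec z i| ≤ n2 z := abs_coord_le_n2 z i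
        have : ‖scale z * cubeVec z i‖ = |Real.sin (π * rr z)| / n2 z * |cubeVec z i| := by
          rw [Real.norm_eq_abs, abs_mul, scale, abs_div, abs_of_pos hn]
        rw [this]
        calc |Real.sin (π * rr z)| / n2 z * |cubeVec z i|
            ≤ |Real.sin (π * rr z)| / n2 z * n2 z := by
              apply mul_le_mul_of_nonneg_left h1 (by positivity)
          _ = |Real.sin (π * rr z)| := by field_simp
    · have hr0 : rr y = 0 := rr_eq_zero_iff.2 (n2_eq_zero_iff.1 h)
      have hc : Continuous fun z : I^ Fin (n + 1) => |Real.sin (π * rr z)| :=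
        (Real.continuous_sin.comp (continuous_const.mul continuous_rr)).abs
      have := hc.continuousAt (x := y)
      rw [ContinuousAt] at this
      simpa [hr0] using this
  · exact (((Real.continuous_sin.comp
        (continuous_const.mul continuous_rr)).continuousAt.div
        continuous_n2.continuousAt h).mul
        ((continuous_apply i).comp continuous_cubeVec).continuousAt)

open Real in
lemma continuous_gmap : Continuous (gmap (n := n)) := by
  apply (PiLp.continuous_toLp 2 _).comp
  apply continuous_pi
  intro i
  induction i using Fin.lastCases with
  | last => simpa [gvec, Function.comp_def] using
      (Real.continuous_cos.comp (continuous_const.mul continuous_rr))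
  | cast i => simpa [gvec] using continuous_scaleCoord i

/-- the south pole, image of the cube boundary -/
def southVec : EuclideanSpace ℝ (Fin (n + 2)) :=
  (WithLp.equiv 2 _).symm (Fin.snoc (fun _ => (0:ℝ)) (-1))

open Real in
lemma gmap_boundary {y : I^ Fin (n + 1)} (h : y ∈ Cube.boundary (Fin (n + 1))) :
    gmap y = southVec := by
  have hr : rr y = 1 := rr_eq_one_iff.2 h
  have hs : Real.sin (π * rr y) = 0 := by rw [hr, mul_one, Real.sin_pi]
  ext i
  induction i using Fin.lastCases with
  | last => simp [hr, Real.cos_pi, southVec]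
  | cast i => simp [scale, hs, southVec]

open Real in
lemma rr_eq_of_gmap_eq {a b : I^ Fin (n + 1)} (h : gmap a = gmap b) : rr a = rr b := by
  have hl := congrFun (congrArg (WithLp.equiv 2 _) h) (Fin.last (n + 1))
  simp only [WithLp.equiv_apply] at hl
  have hl' : Real.cos (π * rr a) = Real.cos (π * rr b) := by
    simpa [gmap, gvec] using hl
  have h1 : π * rr a ∈ Icc 0 π := ⟨mul_nonneg Real.pi_pos.le (rr_nonneg a),
    by nlinarith [rr_le_one a, Real.pi_pos]⟩
  have h2 : π * rr b ∈ Icc 0 π := ⟨mul_nonneg Real.pi_pos.le (rr_nonneg b),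
    by nlinarith [rr_le_one b, Real.pi_pos]⟩
  have := Real.injOn_cos h1 h2 hl'
  exact mul_left_cancel₀ Real.pi_ne_zero this

open Real in
lemma gmap_fiber {a b : I^ Fin (n + 1)} (h : gmap a = gmap b) :
    a = b ∨ (a ∈ Cube.boundary (Fin (n + 1)) ∧ b ∈ Cube.boundary (Fin (n + 1))) := by
  have hr : rr a = rr b := rr_eq_of_gmap_eq h
  rcases eq_or_lt_of_le (rr_le_one a) with h1 | h1
  · exact Or.inr ⟨rr_eq_one_iff.1 h1, rr_eq_one_iff.1 (hr ▸ h1)⟩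
  rcases eq_or_lt_of_le (rr_nonneg a) with h0 | h0
  · left
    apply cubeVec_injective
    rw [rr_eq_zero_iff.1 h0.symm, rr_eq_zero_iff.1 (show rr b = 0 by rw [← hr, ← h0])]
  · -- 0 < rr a < 1
    left
    have hsin : 0 < Real.sin (π * rr a) :=
      Real.sin_pos_of_pos_of_lt_pi (by positivity)
        (by nlinarith [Real.pi_pos])
    have hna : 0 < n2 a := n2_pos_of_rr_pos h0
    have hnb : 0 < n2 b := n2_pos_of_rr_pos (hr ▸ h0)
    have hcoord : ∀ i, scale a * cubeVec a i = scale b * cubeVec b i := by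
      intro i
      have := congrFun (congrArg (WithLp.equiv 2 _) h) (Fin.castSucc i)
      simpa [gmap, gvec] using this
    have hsa : scale a ≠ 0 := by
      rw [scale]; positivity
    have hsb : scale b ≠ 0 := by
      rw [scale, ← hr]; positivity
    set lam : ℝ := scale b / scale a with hlam
    have hlampos : 0 < lam := by
      rw [hlam, scale, scale, ← hr]
      positivity
    have hvec : cubeVec a = lam • cubeVec b := by
      funext i
      have := hcoord i
      rw [Pi.smul_apply, smul_eq_mul, hlam]
      field_simp
      linarith [this]
    have hnorm : rr a = lam * rr b := by
      rw [rr, hvec, norm_smul, Real.norm_eq_abs, abs_of_pos hlampos, ← rr]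
    have hlam1 : lam = 1 := by
      have hrbpos : 0 < rr b := hr ▸ h0
      rw [hr] at hnorm
      have : lam * rr b = 1 * rr b := by linarith
      exact mul_right_cancel₀ (ne_of_gt hrbpos) this
    apply cubeVec_injective
    rw [hvec, hlam1, one_smul]

@[simp] lemma southVec_castSucc (j : Fin (n + 1)) :
    southVec (n := n) (Fin.castSucc j) = 0 := by
  simp [southVec]

@[simp] lemma southVec_last : southVec (n := n) (Fin.last (n + 1)) = -1 := by
  simp [southVec]

open Real in
lemma gmap_surjective {z : EuclideanSpace ℝ (Fin (n + 2))} (hz : ‖z‖ = 1) :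
    ∃ y, gmap y = z := by
  have hsum : ∑ i, (z i) ^ 2 = 1 := by
    rw [EuclideanSpace.norm_eq] at hz
    have := Real.sqrt_eq_one.1 hz
    rw [← this]; congr 1; funext i; rw [Real.norm_eq_abs, sq_abs]
  set cl : ℝ := z (Fin.last (n + 1)) with hcl
  set w : Fin (n + 1) → ℝ := fun j => z (Fin.castSucc j) with hwdef
  have hsplit : ∑ j, (w j) ^ 2 + cl ^ 2 = 1 := by
    have h := Fin.sum_univ_castSucc (f := fun i : Fin (n+2) => (z i) ^ 2)
    rw [hsum] at h
    exact h.symm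
  have hwnonneg : (0:ℝ) ≤ ∑ j, (w j) ^ 2 := Finset.sum_nonneg fun j _ => sq_nonneg _
  have hcl2 : cl ^ 2 ≤ 1 := by linarith
  have hclle : -1 ≤ cl ∧ cl ≤ 1 := by
    have habs : |cl| ≤ 1 := by nlinarith [abs_nonneg cl, sq_abs cl]
    exact abs_le.1 habs
  by_cases hw : w = 0
  · have hcl1 : cl ^ 2 = 1 := by
      rw [hw] at hsplit; simpa using hsplit
    have : (cl - 1) * (cl + 1) = 0 := by ring_nf; linarith
    rcases mul_eq_zero.1 this with h' | h'
    · -- cl = 1, north pole, center of the cube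
      have hc1 : cl = 1 := by linarith
      refine ⟨fun _ => ⟨1/2, by norm_num, by norm_num⟩, ?_⟩
      have hcv : cubeVec (n := n) (fun _ => ⟨1/2, by norm_num, by norm_num⟩) = 0 := by
        funext j; funext; simp only [cubeVec]; norm_num
      have hr : rr (n := n) (fun _ => ⟨1/2, by norm_num, by norm_num⟩) = 0 :=
        rr_eq_zero_iff.2 hcv
      ext i
      induction i using Fin.lastCases with
      | last => rw [gmap_last, hr]; simpa using hc1.symm
      | cast j =>
          rw [gmap_castSucc, hcv]
          have : w j = 0 := by rw [hw]; rfl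
          simp only [Pi.zero_apply, mul_zero]
          rw [show z (Fin.castSucc j) = w j from rfl, this]
    · -- cl = -1, south pole, boundary
      have hc1 : cl = -1 := by linarith
      refine ⟨y₀, ?_⟩
      rw [gmap_boundary y₀_mem_boundary]
      ext i
      induction i using Fin.lastCases with
      | last =>
          rw [southVec_last, show z (Fin.last (n+1)) = cl from rfl, hc1]
      | cast j =>
          rw [southVec_castSucc]
          have : w j = 0 := by rw [hw]; rfl
          rw [show z (Fin.castSucc j) = w j from rfl, this]
  · -- generic case
    set m : ℝ := ‖w‖ with hm
    have hmpos : 0 < m := norm_pos_iff.2 hw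
    set wE : EuclideanSpace ℝ (Fin (n + 1)) := (WithLp.equiv 2 _).symm w with hwE
    have hwE0 : wE ≠ 0 := by
      intro hc
      apply hw
      funext j
      have := congrFun (congrArg (WithLp.equiv 2 _) hc) j
      simpa [hwE] using this
    set nv : ℝ := ‖wE‖ with hnv
    have hnvpos : 0 < nv := norm_pos_iff.2 hwE0
    have hnv2 : nv ^ 2 = ∑ j, (w j) ^ 2 := by
      rw [hnv, EuclideanSpace.norm_eq, Real.sq_sqrt (by positivity)]
      congr 1; funext j
      rw [Real.norm_eq_abs, sq_abs]
      congr 1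
    set R : ℝ := Real.arccos cl / π with hR
    have hR0 : 0 ≤ R := div_nonneg (Real.arccos_nonneg cl) Real.pi_pos.le
    have hR1 : R ≤ 1 := by
      rw [hR, div_le_one Real.pi_pos]; exact Real.arccos_le_pi cl
    have hpiR : π * R = Real.arccos cl := by
      rw [hR]; field_simp
    have hcos : Real.cos (π * R) = cl := by
      rw [hpiR]; exact Real.cos_arccos hclle.1 hclle.2
    have hsin : Real.sin (π * R) = nv := by
      rw [hpiR, Real.sin_arccos]
      have : 1 - cl ^ 2 = nv ^ 2 := by rw [hnv2]; linarith
      rw [this, Real.sqrt_sq hnvpos.le]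
    have hRpos : 0 < R := by
      rcases lt_or_eq_of_le hR0 with h' | h'
      · exact h'
      · exfalso
        have : Real.sin (π * R) = 0 := by rw [← h', mul_zero, Real.sin_zero]
        rw [hsin] at this; exact absurd this (ne_of_gt hnvpos)
    have hmem : ∀ j, (1 + (R/m) * w j) / 2 ∈ I := by
      intro j
      have h1 : |w j| ≤ m := by simpa using norm_le_pi_norm w j
      have h2 : |(R/m) * w j| ≤ R := by
        rw [abs_mul, abs_of_nonneg (by positivity : (0:ℝ) ≤ R/m)]
        calc R/m * |w j| ≤ R/m * m := by
              apply mul_le_mul_of_nonneg_left h1 (by positivity)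
          _ = R := by field_simp
      have h3 := abs_le.1 (h2.trans hR1)
      constructor
      · nlinarith [h3.1, h3.2]
      · nlinarith [h3.1, h3.2]
    refine ⟨fun j => ⟨(1 + (R/m) * w j) / 2, hmem j⟩, ?_⟩
    set y : I^ Fin (n + 1) := fun j => ⟨(1 + (R/m) * w j) / 2, hmem j⟩ with hy
    have hcv : cubeVec y = (R/m) • w := by
      funext j
      simp only [cubeVec, hy, Pi.smul_apply, smul_eq_mul]
      ring
    have hrr : rr y = R := by
      rw [rr, hcv, norm_smul, Real.norm_eq_abs,
        abs_of_nonneg (by positivity : (0:ℝ) ≤ R/m), ← hm]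
      field_simp
    have heV : eVec y = (R/m) • wE := by
      simp only [eVec, hcv, hwE, WithLp.equiv_symm_apply, WithLp.toLp_smul]
    have hn2 : n2 y = (R/m) * nv := by
      rw [n2, heV, norm_smul, Real.norm_eq_abs,
        abs_of_nonneg (by positivity : (0:ℝ) ≤ R/m), hnv]
    have hscale : scale y = m / R := by
      rw [scale, hrr, hsin, hn2]
      field_simp
    ext i
    induction i using Fin.lastCases with
    | last => rw [gmap_last, hrr, hcos]
    | cast j =>
        rw [gmap_castSucc, hscale, hcv]
        simp only [Pi.smul_apply, smul_eq_mul]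
        rw [show z (Fin.castSucc j) = w j from rfl]
        field_simp

/-- the sphere in which everything happens -/
abbrev Sph (n : ℕ) := Metric.sphere (0 : EuclideanSpace ℝ (Fin (n + 2))) 1

/-- the projection cube → sphere as a continuous map -/
def projCube : C(I^ Fin (n + 1), Sph n) :=
  ⟨fun y => ⟨gmap y, mem_sphere_zero_iff_norm.2 (norm_gmap y)⟩,
   continuous_gmap.subtype_mk _⟩

lemma projCube_surjective : Function.Surjective (projCube (n := n)) := by
  rintro ⟨z, hz⟩
  obtain ⟨y, hy⟩ := gmap_surjective (mem_sphere_zero_iff_norm.1 hz)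
  exact ⟨y, Subtype.ext hy⟩

/-- the south pole, image of the boundary -/
def southPole : Sph n := projCube y₀

lemma projCube_boundary {y : I^ Fin (n + 1)} (h : y ∈ Cube.boundary (Fin (n + 1))) :
    projCube y = southPole (n := n) := by
  apply Subtype.ext
  show gmap y = gmap y₀
  rw [gmap_boundary h, gmap_boundary y₀_mem_boundary]

lemma projCube_fiber {a b : I^ Fin (n + 1)} (h : projCube a = projCube b) :
    a = b ∨ (a ∈ Cube.boundary (Fin (n + 1)) ∧ b ∈ Cube.boundary (Fin (n + 1))) :=
  gmap_fiber (congrArg Subtype.val h)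

lemma projCube_isQuotientMap : IsQuotientMap (projCube (n := n)) :=
  IsQuotientMap.of_surjective_continuous projCube_surjective projCube.continuous


lemma eq_of_projCube_eq {q : (I^ Fin (n + 1)) → X}
    (hq : ∀ y ∈ Cube.boundary (Fin (n + 1)), ∀ z ∈ Cube.boundary (Fin (n + 1)), q y = q z)
    {a b : I^ Fin (n + 1)} (h : projCube a = projCube b) : q a = q b := by
  rcases projCube_fiber h with h' | ⟨ha, hb⟩
  · rw [h']
  · exact hq a ha b hb

/-- lift a boundary-constant cube map to the sphere -/
lemma exists_lift (q : C(I^ Fin (n + 1), X))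
    (hq : ∀ y ∈ Cube.boundary (Fin (n + 1)), ∀ z ∈ Cube.boundary (Fin (n + 1)), q y = q z) :
    ∃ qb : C(Sph n, X), ∀ y, qb (projCube y) = q y := by
  set g : Sph n → X := fun z => q (Function.surjInv projCube_surjective z) with hg
  have hkey : ∀ y, g (projCube y) = q y := by
    intro y
    apply eq_of_projCube_eq hq
    exact Function.surjInv_eq projCube_surjective _
  have hcont : Continuous g := by
    rw [projCube_isQuotientMap.continuous_iff]
    exact (q.continuous).congr fun y => (hkey y).symm
  exact ⟨⟨g, hcont⟩, hkey⟩

/-- lift a homotopy of boundary-constant cube maps (slicewise constant on the boundary)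
to the sphere -/
lemma exists_lift2 (K : C(I × (I^ Fin (n + 1)), X))
    (hK : ∀ t : I, ∀ y ∈ Cube.boundary (Fin (n + 1)), ∀ z ∈ Cube.boundary (Fin (n + 1)),
      K (t, y) = K (t, z)) :
    ∃ Kb : C(I × Sph n, X), ∀ t y, Kb (t, projCube y) = K (t, y) := by
  have hsurj : Function.Surjective (Prod.map (id : I → I) (projCube (n := n))) :=
    Function.Surjective.prodMap Function.surjective_id projCube_surjective
  have hcont : Continuous (Prod.map (id : I → I) (projCube (n := n))) :=
    continuous_id.prodMap projCube.continuous
  have hquot : IsQuotientMap (Prod.map (id : I → I) (projCube (n := n))) :=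
    IsQuotientMap.of_surjective_continuous hsurj hcont
  set g : I × Sph n → X := fun p => K (Function.surjInv hsurj p) with hg
  have hfib : ∀ a b : I × (I^ Fin (n + 1)),
      Prod.map id projCube a = Prod.map id projCube b → K a = K b := by
    rintro ⟨t, y⟩ ⟨t', y'⟩ hab
    have ht : t = t' := congrArg Prod.fst hab
    have hyz : projCube y = projCube y' := congrArg Prod.snd hab
    subst ht
    exact eq_of_projCube_eq (q := fun y => K (t, y)) (hK t) hyz
  have hkey : ∀ p, g (Prod.map id projCube p) = K p := by
    intro p
    exact hfib _ _ (Function.surjInv_eq hsurj _)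
  have hcontg : Continuous g := by
    rw [hquot.continuous_iff]
    exact (K.continuous).congr fun p => (hkey p).symm
  exact ⟨⟨g, hcontg⟩, fun t y => hkey (t, y)⟩

/-! ### radial stretch and collar constructions -/

/-- radial stretch of the cube by factor `1/s` (clamped into the cube) -/
def stretch (s : ℝ) (y : I^ Fin (n + 1)) : I^ Fin (n + 1) :=
  fun i => Set.projIcc (0:ℝ) 1 zero_le_one (1/2 + ((y i : ℝ) - 1/2) / s)

lemma continuous_stretch {Z : Type*} [TopologicalSpace Z] {s : Z → ℝ} (hs : Continuous s)
    (hne : ∀ z, s z ≠ 0) {yf : Z → I^ Fin (n + 1)} (hy : Continuous yf) :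
    Continuous fun z => stretch (s z) (yf z) := by
  apply continuous_pi
  intro i
  apply continuous_projIcc.comp
  have h1 : Continuous fun z => ((yf z i : ℝ) - 1/2) :=
    (continuous_subtype_val.comp ((continuous_apply i).comp hy)).sub continuous_const
  exact continuous_const.add (h1.div hs hne)

lemma stretch_coord {s : ℝ} (hs : 0 < s) {y : I^ Fin (n + 1)} (h : rr y ≤ s) (i) :
    ((stretch s y i : ℝ)) = 1/2 + ((y i : ℝ) - 1/2) / s := by
  have hb : |2 * (y i : ℝ) - 1| ≤ s := by
    have := (abs_cubeVec_le_rr y i).trans h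
    simpa [cubeVec] using this
  have hb' := abs_le.1 hb
  have h0 : 0 ≤ 1/2 + ((y i : ℝ) - 1/2)/s := by
    have : -(1/2 : ℝ) ≤ ((y i : ℝ) - 1/2)/s := by
      rw [le_div_iff₀ hs]
      nlinarith [hb'.1]
    linarith
  have h1 : 1/2 + ((y i : ℝ) - 1/2)/s ≤ 1 := by
    have : ((y i : ℝ) - 1/2)/s ≤ 1/2 := by
      rw [div_le_iff₀ hs]
      nlinarith [hb'.2]
    linarith
  show (Set.projIcc (0:ℝ) 1 zero_le_one _ : ℝ) = _
  rw [Set.coe_projIcc, min_eq_right h1, max_eq_right h0]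

lemma cubeVec_stretch {s : ℝ} (hs : 0 < s) {y : I^ Fin (n + 1)} (h : rr y ≤ s) :
    cubeVec (stretch s y) = s⁻¹ • cubeVec y := by
  funext i
  rw [cubeVec, stretch_coord hs h i]
  simp only [Pi.smul_apply, smul_eq_mul, cubeVec]
  field_simp
  ring

lemma rr_stretch {s : ℝ} (hs : 0 < s) {y : I^ Fin (n + 1)} (h : rr y ≤ s) :
    rr (stretch s y) = rr y / s := by
  rw [rr, cubeVec_stretch hs h, norm_smul, Real.norm_eq_abs, abs_inv,
    abs_of_pos hs, ← rr]
  rw [inv_mul_eq_div]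

lemma stretch_one (y : I^ Fin (n + 1)) : stretch 1 y = y := by
  funext i
  apply Subtype.ext
  rw [stretch_coord one_pos (rr_le_one y) i]
  ring

lemma stretch_boundary {s : ℝ} (hs : 0 < s) {y : I^ Fin (n + 1)} (h : rr y = s) :
    stretch s y ∈ Cube.boundary (Fin (n + 1)) := by
  apply rr_eq_one_iff.1
  rw [rr_stretch hs h.le, h, div_self (ne_of_gt hs)]

/-! ### free null-homotopy implies based null-homotopy -/

open Topology.Homotopy in
lemma genLoop_homotopic_const_of_free_null {x₀ : X} (f : GenLoop (Fin (n + 1)) X x₀) (c : X)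
    (H : ContinuousMap.Homotopy f.1 (ContinuousMap.const _ c))
    (hH : ∀ t : I, ∀ y ∈ Cube.boundary (Fin (n + 1)), ∀ z ∈ Cube.boundary (Fin (n + 1)),
      H (t, y) = H (t, z)) :
    GenLoop.Homotopic f (GenLoop.const) := by
  classical
  -- the boundary trace path
  set γ : Path x₀ c :=
    { toFun := fun t => H (t, y₀)
      continuous_toFun := H.continuous.comp (continuous_id.prodMk continuous_const)
      source' := by simpa using f.2 y₀ y₀_mem_boundary
      target' := by simp } with hγ
  -- the intermediate map
  set φ : C(I^ Fin (n + 1), X) := ⟨fun y => γ.extend (2 - 2 * rr y),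
    γ.continuous_extend.comp (continuous_const.sub (continuous_const.mul continuous_rr))⟩
    with hφ
  have hcond_zero : ∀ y : I^ Fin (n + 1), 2 * rr y ≤ 2 - ((0:I):ℝ) := by
    intro y
    have := rr_le_one y
    norm_num
    linarith
  set G1fun : I × (I^ Fin (n + 1)) → X := fun p =>
    if 2 * rr p.2 ≤ 2 - (p.1 : ℝ) then H (p.1, stretch (1 - (p.1 : ℝ)/2) p.2)
    else γ.extend (2 - 2 * rr p.2) with hG1def
  have hs_pos : ∀ t : I, (0:ℝ) < 1 - (t:ℝ)/2 := by
    intro t; have := t.2.2; norm_num; linarith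
  have hG1cont : Continuous G1fun := by
    apply continuous_if_le
    · exact continuous_const.mul (continuous_rr.comp continuous_snd)
    · exact continuous_const.sub (continuous_subtype_val.comp continuous_fst)
    · apply Continuous.continuousOn
      exact H.continuous.comp (((continuous_fst).prodMk ((continuous_stretch
        (continuous_const.sub ((continuous_subtype_val.comp continuous_fst).div_const 2))
        (fun p => ne_of_gt (hs_pos p.1)) continuous_snd))))
    · exact (γ.continuous_extend.comp (continuous_const.sub
        (continuous_const.mul (continuous_rr.comp continuous_snd)))).continuousOn
    · rintro ⟨t, y⟩ hyp
      have hrr : rr y = 1 - (t:ℝ)/2 := by linarith [hyp]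
      have hb : stretch (1 - (t:ℝ)/2) y ∈ Cube.boundary (Fin (n + 1)) :=
        stretch_boundary (hs_pos t) hrr
      have h1 : H (t, stretch (1 - (t:ℝ)/2) y) = H (t, y₀) :=
        hH t _ hb _ y₀_mem_boundary
      have h2 : (2 : ℝ) - 2 * rr y = (t:ℝ) := by rw [hrr]; ring
      show H (t, stretch (1 - (t:ℝ)/2) y) = γ.extend (2 - 2 * rr y)
      rw [h1, h2, Path.extend_apply γ ⟨t.2.1, t.2.2⟩]
      rfl
  have hG1 : f.1.HomotopyRel φ (Cube.boundary (Fin (n + 1))) :=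
    { toFun := G1fun
      continuous_toFun := hG1cont
      map_zero_left := by
        intro y
        show (if 2 * rr y ≤ 2 - ((0:I):ℝ) then H ((0:I), stretch (1 - ((0:I):ℝ)/2) y)
          else γ.extend (2 - 2 * rr y)) = f.1 y
        rw [if_pos (hcond_zero y)]
        have h12 : (1 : ℝ) - ((0:I):ℝ)/2 = 1 := by norm_num
        rw [h12, stretch_one]
        exact H.apply_zero y
      map_one_left := by
        intro y
        show (if 2 * rr y ≤ 2 - ((1:I):ℝ) then H ((1:I), stretch (1 - ((1:I):ℝ)/2) y)
          else γ.extend (2 - 2 * rr y)) = φ y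
        by_cases hc : 2 * rr y ≤ 2 - ((1:I):ℝ)
        · rw [if_pos hc]
          have h2 : (1:ℝ) ≤ 2 - 2 * rr y := by
            norm_num at hc; linarith
          rw [H.apply_one]
          show c = γ.extend (2 - 2 * rr y)
          rw [Path.extend_of_one_le γ h2]
        · rw [if_neg hc]
          rfl
      prop' := by
        intro t y hy
        have hrr : rr y = 1 := rr_eq_one_iff.2 hy
        have hfy : f.1 y = x₀ := f.2 y hy
        show (if 2 * rr y ≤ 2 - ((t:I):ℝ) then H (t, stretch (1 - ((t:I):ℝ)/2) y)
          else γ.extend (2 - 2 * rr y)) = f.1 y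
        by_cases hc : 2 * rr y ≤ 2 - (t:ℝ)
        · have ht0 : (t:ℝ) = 0 := by
            rw [hrr] at hc; have := t.2.1; linarith
          rw [if_pos hc]
          have ht0' : t = (0:I) := Subtype.ext ht0
          rw [ht0']
          have h12 : (1 : ℝ) - ((0:I):ℝ)/2 = 1 := by norm_num
          rw [h12, stretch_one]
          exact H.apply_zero y
        · rw [if_neg hc, hrr]
          have h0 : (2:ℝ) - 2 * 1 = 0 := by norm_num
          rw [h0, hfy]
          exact γ.extend_zero }
  have hG2 : φ.HomotopyRel (GenLoop.const (x := x₀)).1 (Cube.boundary (Fin (n + 1))) :=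
    { toFun := fun p => γ.extend ((1 - (p.1:ℝ)) * (2 - 2 * rr p.2))
      continuous_toFun := γ.continuous_extend.comp
        ((continuous_const.sub (continuous_subtype_val.comp continuous_fst)).mul
          (continuous_const.sub (continuous_const.mul (continuous_rr.comp continuous_snd))))
      map_zero_left := by
        intro y
        show γ.extend ((1 - ((0:I):ℝ)) * (2 - 2 * rr y)) = γ.extend (2 - 2 * rr y)
        norm_num
      map_one_left := by
        intro y
        show γ.extend ((1 - ((1:I):ℝ)) * (2 - 2 * rr y)) = x₀
        have h0 : (1 - ((1:I):ℝ)) * (2 - 2 * rr y) = 0 := by norm_num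
        rw [h0]
        exact γ.extend_zero
      prop' := by
        intro t y hy
        have hrr : rr y = 1 := rr_eq_one_iff.2 hy
        show γ.extend ((1 - (t:ℝ)) * (2 - 2 * rr y)) = γ.extend (2 - 2 * rr y)
        rw [hrr]
        norm_num }
  exact ⟨hG1.trans hG2⟩

/-! ### based representative of a sphere map and its free homotopy -/

variable {x₀ : X}

/-- composition of a sphere map with the projection -/
def p0 (f : C(Sph n, X)) : C(I^ Fin (n + 1), X) := f.comp projCube

lemma p0_boundary (f : C(Sph n, X)) {y : I^ Fin (n + 1)}
    (hy : y ∈ Cube.boundary (Fin (n + 1))) : p0 f y = f (southPole (n := n)) := by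
  show f (projCube y) = f southPole
  rw [projCube_boundary hy]

lemma range_p0 (f : C(Sph n, X)) : range (p0 f) ⊆ range f := by
  rintro x ⟨y, rfl⟩
  exact ⟨projCube y, rfl⟩

/-- the based representative: graft a path onto a collar -/
def pGen (f : C(Sph n, X)) (α : Path x₀ (f (southPole (n := n)))) :
    GenLoop (Fin (n + 1)) X x₀ := by
  classical
  refine ⟨⟨fun y => if 2 * rr y ≤ 1 then p0 f (stretch (1/2) y) else α.extend (2 - 2 * rr y),
    ?_⟩, ?_⟩
  · apply continuous_if_le
    · exact continuous_const.mul continuous_rr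
    · exact continuous_const
    · exact ((p0 f).continuous.comp (continuous_stretch continuous_const
        (fun _ => by norm_num) continuous_id)).continuousOn
    · exact (α.continuous_extend.comp
        (continuous_const.sub (continuous_const.mul continuous_rr))).continuousOn
    · intro y hyp
      have hrr : rr y = 1/2 := by linarith
      have hb := stretch_boundary (s := (1/2 : ℝ)) (by norm_num) hrr
      rw [p0_boundary f hb]
      have h1 : (2:ℝ) - 2 * rr y = 1 := by rw [hrr]; ring
      rw [h1, Path.extend_one]
  · intro y hy
    have hrr : rr y = 1 := rr_eq_one_iff.2 hy
    show (if 2 * rr y ≤ 1 then p0 f (stretch (1/2) y) else α.extend (2 - 2 * rr y)) = x₀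
    rw [if_neg (by rw [hrr]; norm_num), hrr]
    have h0 : (2:ℝ) - 2 * 1 = 0 := by norm_num
    rw [h0]
    exact α.extend_zero

/-- free homotopy from `p0 f` to the based representative, slicewise constant on the boundary -/
def freeHomotopy (f : C(Sph n, X)) (α : Path x₀ (f (southPole (n := n)))) :
    ContinuousMap.Homotopy (p0 f) (pGen f α).1 := by
  classical
  have hs_pos : ∀ t : I, (0:ℝ) < 1 - (t:ℝ)/2 := by
    intro t; have := t.2.2; norm_num; linarith
  refine
    { toFun := fun p =>
        if 2 * rr p.2 ≤ 2 - (p.1 : ℝ) then p0 f (stretch (1 - (p.1 : ℝ)/2) p.2)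
        else α.extend (3 - (p.1 : ℝ) - 2 * rr p.2)
      continuous_toFun := ?_
      map_zero_left := ?_
      map_one_left := ?_ }
  · apply continuous_if_le
    · exact continuous_const.mul (continuous_rr.comp continuous_snd)
    · exact continuous_const.sub (continuous_subtype_val.comp continuous_fst)
    · exact ((p0 f).continuous.comp (continuous_stretch
        (continuous_const.sub ((continuous_subtype_val.comp continuous_fst).div_const 2))
        (fun p => ne_of_gt (hs_pos p.1)) continuous_snd)).continuousOn
    · exact (α.continuous_extend.comp ((continuous_const.sub
        (continuous_subtype_val.comp continuous_fst)).sub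
        (continuous_const.mul (continuous_rr.comp continuous_snd)))).continuousOn
    · rintro ⟨t, y⟩ hyp
      have hrr : rr y = 1 - (t:ℝ)/2 := by linarith [hyp]
      have hb := stretch_boundary (hs_pos t) hrr
      show p0 f (stretch (1 - (t:ℝ)/2) y) = α.extend (3 - (t:ℝ) - 2 * rr y)
      rw [p0_boundary f hb]
      have h1 : (3:ℝ) - (t:ℝ) - 2 * rr y = 1 := by rw [hrr]; ring
      rw [h1, Path.extend_one]
  · intro y
    show (if 2 * rr y ≤ 2 - ((0:I):ℝ) then p0 f (stretch (1 - ((0:I):ℝ)/2) y)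
      else α.extend (3 - ((0:I):ℝ) - 2 * rr y)) = p0 f y
    rw [if_pos (by norm_num; linarith [rr_le_one y])]
    have h12 : (1 : ℝ) - ((0:I):ℝ)/2 = 1 := by norm_num
    rw [h12, stretch_one]
  · intro y
    show (if 2 * rr y ≤ 2 - ((1:I):ℝ) then p0 f (stretch (1 - ((1:I):ℝ)/2) y)
        else α.extend (3 - ((1:I):ℝ) - 2 * rr y))
      = (if 2 * rr y ≤ 1 then p0 f (stretch (1/2) y) else α.extend (2 - 2 * rr y))
    have hcond : ((2:ℝ) - ((1:I):ℝ)) = 1 := by norm_num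
    by_cases hc : 2 * rr y ≤ 1
    · rw [if_pos (by rw [hcond]; exact hc), if_pos hc]
      have h12 : (1 : ℝ) - ((1:I):ℝ)/2 = 1/2 := by norm_num
      rw [h12]
    · rw [if_neg (by rw [hcond]; exact hc), if_neg hc]
      have h3 : (3:ℝ) - ((1:I):ℝ) - 2 * rr y = 2 - 2 * rr y := by norm_num
      rw [h3]

lemma freeHomotopy_slice (f : C(Sph n, X)) (α : Path x₀ (f (southPole (n := n)))) :
    ∀ t : I, ∀ y ∈ Cube.boundary (Fin (n + 1)), ∀ z ∈ Cube.boundary (Fin (n + 1)),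
      freeHomotopy f α (t, y) = freeHomotopy f α (t, z) := by
  classical
  intro t y hy z hz
  have hry : rr y = 1 := rr_eq_one_iff.2 hy
  have hrz : rr z = 1 := rr_eq_one_iff.2 hz
  show (if 2 * rr y ≤ 2 - (t:ℝ) then p0 f (stretch (1 - (t:ℝ)/2) y)
      else α.extend (3 - (t:ℝ) - 2 * rr y))
    = (if 2 * rr z ≤ 2 - (t:ℝ) then p0 f (stretch (1 - (t:ℝ)/2) z)
      else α.extend (3 - (t:ℝ) - 2 * rr z))
  rw [hry, hrz]
  by_cases hc : (2:ℝ) * 1 ≤ 2 - (t:ℝ)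
  · rw [if_pos hc, if_pos hc]
    have ht0 : t = (0:I) := Subtype.ext (by
      have := t.2.1
      have h' : (t:ℝ) ≤ 0 := by linarith
      simpa using le_antisymm h' this)
    rw [ht0]
    have h12 : (1 : ℝ) - ((0:I):ℝ)/2 = 1 := by norm_num
    rw [h12, stretch_one, stretch_one, p0_boundary f hy, p0_boundary f hz]
  · rw [if_neg hc, if_neg hc]

/-- pull a null-homotopy on the sphere back to the cube -/
def pullbackHomotopy {qb : C(Sph n, X)} {c : X}
    (K : ContinuousMap.Homotopy qb (ContinuousMap.const _ c))
    (q : C(I^ Fin (n + 1), X)) (hq : ∀ y, qb (projCube y) = q y) :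
    ContinuousMap.Homotopy q (ContinuousMap.const _ c) where
  toFun p := K (p.1, projCube p.2)
  continuous_toFun := K.continuous.comp (continuous_fst.prodMk
    (projCube.continuous.comp continuous_snd))
  map_zero_left y := by
    show K ((0:I), projCube y) = q y
    rw [K.apply_zero]; exact hq y
  map_one_left y := by
    show K ((1:I), projCube y) = c
    rw [K.apply_one]
    rfl

lemma pullbackHomotopy_slice {qb : C(Sph n, X)} {c : X}
    (K : ContinuousMap.Homotopy qb (ContinuousMap.const _ c))
    (q : C(I^ Fin (n + 1), X)) (hq : ∀ y, qb (projCube y) = q y) :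
    ∀ t : I, ∀ y ∈ Cube.boundary (Fin (n + 1)), ∀ z ∈ Cube.boundary (Fin (n + 1)),
      pullbackHomotopy K q hq (t, y) = pullbackHomotopy K q hq (t, z) := by
  intro t y hy z hz
  show K (t, projCube y) = K (t, projCube z)
  rw [projCube_boundary hy, projCube_boundary hz]

end SpanierAux

open SpanierAux in
/-- A path-connected space is semilocally `π_{n+1}`-trivial iff some open cover has
trivial `(n+1)`-st Spanier group. -/
theorem semilocallyPiTrivial_iff_spanierGroup_bot (n : ℕ) [PathConnectedSpace X] (x₀ : X) :
    SemilocallyPiTrivial (n + 1) X ↔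
      ∃ 𝒰 : Set (Set X), IsOpenCover 𝒰 ∧ spanierGroup n 𝒰 x₀ = ⊥ := by
  constructor
  · intro h
    refine ⟨{U | IsOpen U ∧ ∀ f : C(unitSphere (n + 1), X), range f ⊆ U →
      ∃ c : X, ContinuousMap.Homotopic f (ContinuousMap.const _ c)},
      ⟨fun U hU => hU.1, ?_⟩, ?_⟩
    · apply eq_univ_of_forall
      intro x
      obtain ⟨U, hUo, hxU, hUn⟩ := h x
      exact mem_sUnion.2 ⟨U, ⟨hUo, hUn⟩, hxU⟩
    · rw [spanierGroup, ← le_bot_iff]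
      apply (Subgroup.closure_le _).2
      rintro γ ⟨f, ⟨q, U, H, hU, hrange, hslice⟩, rfl⟩
      refine (Subgroup.mem_bot (G := π_ (n + 1) X x₀)).2 ?_
      have hqb : ∀ y ∈ Cube.boundary (Fin (n + 1)), ∀ z ∈ Cube.boundary (Fin (n + 1)),
          q y = q z := by
        intro y hy z hz
        have := hslice 1 y hy z hz
        rwa [H.apply_one, H.apply_one] at this
      obtain ⟨qb, hqb_lift⟩ := exists_lift q hqb
      have hrqb : range qb ⊆ U := by
        rintro x ⟨z, rfl⟩
        obtain ⟨y, rfl⟩ := projCube_surjective z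
        rw [hqb_lift]
        exact hrange ⟨y, rfl⟩
      obtain ⟨c, hc⟩ := hU.2 qb hrqb
      obtain ⟨K⟩ := hc
      have hHtot : ∀ t : I, ∀ y ∈ Cube.boundary (Fin (n + 1)),
          ∀ z ∈ Cube.boundary (Fin (n + 1)),
          (H.trans (pullbackHomotopy K q hqb_lift)) (t, y)
            = (H.trans (pullbackHomotopy K q hqb_lift)) (t, z) := by
        intro t y hy z hz
        rw [ContinuousMap.Homotopy.trans_apply, ContinuousMap.Homotopy.trans_apply]
        split_ifs with h'
        · exact hslice _ y hy z hz
        · exact pullbackHomotopy_slice K q hqb_lift _ y hy z hz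
      have hhom := genLoop_homotopic_const_of_free_null f c
        (H.trans (pullbackHomotopy K q hqb_lift)) hHtot
      rw [HomotopyGroup.one_def]
      exact Quotient.sound hhom
  · rintro ⟨𝒰, ⟨hopen, hcover⟩, hbot⟩
    letI : Group (Quotient (GenLoop.Homotopic.setoid (Fin (n + 1)) x₀)) :=
      (inferInstance : Group (π_ (n + 1) X x₀))
    intro x
    have hx : x ∈ ⋃₀ 𝒰 := by rw [hcover]; trivial
    obtain ⟨U, hU𝒰, hxU⟩ := mem_sUnion.1 hx
    refine ⟨U, hopen U hU𝒰, hxU, ?_⟩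
    intro f hrange
    obtain α := PathConnectedSpace.somePath x₀ (f (southPole (n := n)))
    set p := pGen f α with hp
    have hfs : FreelySmall 𝒰 p.1 := by
      refine ⟨p0 f, U, (freeHomotopy f α).symm, hU𝒰,
        (range_p0 f).trans hrange, ?_⟩
      intro t y hy z hz
      rw [ContinuousMap.Homotopy.symm_apply, ContinuousMap.Homotopy.symm_apply]
      exact freeHomotopy_slice f α _ y hy z hz
    have hmem : (⟦p⟧ : π_ (n + 1) X x₀) ∈ spanierGroup n 𝒰 x₀ :=
      Subgroup.subset_closure (G := π_ (n + 1) X x₀)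
        (k := {γ | ∃ f : GenLoop (Fin (n + 1)) X x₀, FreelySmall 𝒰 f.1 ∧ γ = ⟦f⟧})
        ⟨p, hfs, rfl⟩
    rw [hbot] at hmem
    replace hmem := (Subgroup.mem_bot (G := π_ (n + 1) X x₀)).1 hmem
    have hhom : GenLoop.Homotopic p GenLoop.const :=
      Quotient.exact (hmem.trans HomotopyGroup.one_def)
    obtain ⟨G⟩ := hhom
    have hslices : ∀ t : I, ∀ y ∈ Cube.boundary (Fin (n + 1)),
        ∀ z ∈ Cube.boundary (Fin (n + 1)),
        ((freeHomotopy f α).trans G.toHomotopy) (t, y)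
          = ((freeHomotopy f α).trans G.toHomotopy) (t, z) := by
      intro t y hy z hz
      rw [ContinuousMap.Homotopy.trans_apply, ContinuousMap.Homotopy.trans_apply]
      split_ifs with h'
      · exact freeHomotopy_slice f α _ y hy z hz
      · exact ((G.eq_fst _ hy).trans ((p.2 y hy).trans (p.2 z hz).symm)).trans
          (G.eq_fst _ hz).symm
    obtain ⟨Kb, hKb⟩ :=
      exists_lift2 ((freeHomotopy f α).trans G.toHomotopy).toContinuousMap hslices
    refine ⟨x₀, ⟨{ toContinuousMap := Kb, map_zero_left := ?_, map_one_left := ?_ }⟩⟩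
    · intro z
      obtain ⟨y, rfl⟩ := projCube_surjective z
      show Kb ((0:I), projCube y) = f (projCube y)
      rw [hKb 0 y]
      exact ((freeHomotopy f α).trans G.toHomotopy).apply_zero y
    · intro z
      obtain ⟨y, rfl⟩ := projCube_surjective z
      show Kb ((1:I), projCube y) = x₀
      rw [hKb 1 y]
      exact ((freeHomotopy f α).trans G.toHomotopy).apply_one y
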